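/- Let g ∈ L^∞(ℝ) be causal (g(τ)=0 for τ<0) with Laplace transform g̃(z) = ∫_0^∞ g(τ)e^{izτ}dτ on the upper half-plane. Then the map η ↦ g̃(·+iη) from (0,∞) to H^s(ℝ_ω) is continuous for all s ∈ ℝ, and for s > 1/2 it extends to a uniformly continuous map from [0,∞) to H^{-s}(ℝ_ω), with g̃(·+iη) → ĝ strongly in H^{-s}(ℝ_ω) as η → 0⁺, where ĝ is the distributional Fourier transform of g. Moreover ‖g̃(·+iη) - ĝ‖_{H^{-s}} ≤ ‖g‖_{L^∞} (2π ∫_0^∞ (1-e^{-ητ})²(1+τ²)^{-s} dτ)^{1/2}. -/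

import Mathlib

/-!
STATEMENT 3: For causal g ∈ L^∞(ℝ), with Laplace transform g̃ on the upper
half-plane and distributional Fourier transform ĝ:
(a) η ↦ g̃(·+iη) is continuous from (0,∞) to H^s(ℝ_ω) for all s ∈ ℝ;
(b) for s > 1/2 it is uniformly continuous from [0,∞) to H^{-s}(ℝ_ω);
(c) g̃(·+iη) → ĝ in H^{-s}(ℝ_ω) as η → 0⁺ (s > 1/2);
(d) ‖g̃(·+iη) - ĝ‖_{H^{-s}} ≤ ‖g‖_{L^∞} (2π ∫_0^∞ (1-e^{-ητ})²(1+τ²)^{-s} dτ)^{1/2}.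

Via the Fourier isometry defining the H^s norms (‖h‖_{H^s}² = 2π∫(1+τ²)^s |(F⁻¹h)(τ)|²dτ),
g̃(·+iη) has time-side representative τ ↦ g(τ)e^{-ητ} (for a.e. τ, since g is causal)
and ĝ has representative g itself; hence all the H^s distances appearing in the
statement are the weighted L² norms `hsNorm` of the corresponding differences.
-/

open MeasureTheory Real Filter

/-- The H^s norm of a frequency-side object, computed from its time-side
representative `u = F⁻¹(·)`: `(2π ∫ (1+τ²)^s ‖u τ‖² dτ)^{1/2}`. -/
noncomputable def hsNorm (s : ℝ) (u : ℝ → ℂ) : ℝ :=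
  Real.sqrt (2 * π * ∫ τ : ℝ, (1 + τ ^ 2) ^ s * ‖u τ‖ ^ 2)

lemma w_cont (s : ℝ) : Continuous (fun τ : ℝ => (1 + τ ^ 2) ^ s) :=
  (continuous_const.add (continuous_pow 2)).rpow_const
    (fun x => Or.inl (by show (1:ℝ) + x ^ 2 ≠ 0; positivity))

lemma weight_integrable {s : ℝ} (hs : 1 / 2 < s) :
    Integrable (fun τ : ℝ => (1 + τ ^ 2) ^ (-s)) := by
  have hnr : ((Module.finrank ℝ ℝ : ℝ)) < 2 * s := by
    simp only [Module.finrank_self, Nat.cast_one]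
    linarith
  have h := integrable_rpow_neg_one_add_norm_sq (E := ℝ) (μ := volume) hnr
  refine h.congr (Eventually.of_forall fun x => ?_)
  simp only [Real.norm_eq_abs, sq_abs]
  congr 1
  ring

lemma hsNorm_le_sqrt (s : ℝ) (u : ℝ → ℂ) (B : ℝ → ℝ) (hB : Integrable B)
    (h : ∀ᵐ τ : ℝ, (1 + τ ^ 2) ^ s * ‖u τ‖ ^ 2 ≤ B τ) :
    hsNorm s u ≤ Real.sqrt (2 * π * ∫ τ, B τ) := by
  apply Real.sqrt_le_sqrt
  have hnn : 0 ≤ᵐ[volume] fun τ : ℝ => (1 + τ ^ 2) ^ s * ‖u τ‖ ^ 2 :=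
    Eventually.of_forall fun τ => by positivity
  exact mul_le_mul_of_nonneg_left (integral_mono_of_nonneg hnn hB h) (by positivity)

lemma exp_sub_exp_le {a b : ℝ} (ha : 0 ≤ a) (hb : 0 ≤ b) :
    |Real.exp (-a) - Real.exp (-b)| ≤ |a - b| := by
  wlog hab : b ≤ a generalizing a b
  · rw [abs_sub_comm, abs_sub_comm a b]; exact this hb ha (le_of_not_ge hab)
  have h1 : Real.exp (-a) ≤ Real.exp (-b) := Real.exp_le_exp.mpr (by linarith)
  rw [abs_of_nonpos (by linarith), abs_of_nonneg (by linarith)]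
  have hmul : Real.exp (-b) * Real.exp (b - a) = Real.exp (-a) := by
    rw [← Real.exp_add]; congr 1; ring
  have h2 := Real.add_one_le_exp (b - a)
  have h3 : Real.exp (-b) ≤ 1 := Real.exp_le_one_iff.mpr (by linarith)
  nlinarith [Real.exp_pos (-b)]

lemma exp_sub_exp_le_one {a b : ℝ} (ha : 0 ≤ a) (hb : 0 ≤ b) :
    |Real.exp (-a) - Real.exp (-b)| ≤ 1 := by
  have p1 := Real.exp_pos (-a)
  have p2 := Real.exp_pos (-b)
  have h1 : Real.exp (-a) ≤ 1 := Real.exp_le_one_iff.mpr (by linarith)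
  have h2 : Real.exp (-b) ≤ 1 := Real.exp_le_one_iff.mpr (by linarith)
  rw [abs_le]; constructor <;> nlinarith

lemma exp_sub_exp_le_mul {a b m : ℝ} (hma : m ≤ a) (hmb : m ≤ b) :
    |Real.exp (-a) - Real.exp (-b)| ≤ |a - b| * Real.exp (-m) := by
  wlog hab : b ≤ a generalizing a b
  · rw [abs_sub_comm, abs_sub_comm a b]; exact this hmb hma (le_of_not_ge hab)
  have h1 : Real.exp (-a) ≤ Real.exp (-b) := Real.exp_le_exp.mpr (by linarith)
  rw [abs_of_nonpos (by linarith), abs_of_nonneg (by linarith)]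
  have hmul : Real.exp (-b) * Real.exp (b - a) = Real.exp (-a) := by
    rw [← Real.exp_add]; congr 1; ring
  have h2 := Real.add_one_le_exp (b - a)
  have h3 : Real.exp (-b) ≤ Real.exp (-m) := Real.exp_le_exp.mpr (by linarith)
  nlinarith [Real.exp_pos (-b), Real.exp_pos (-m),
    mul_le_mul_of_nonneg_right h3 (by linarith : (0:ℝ) ≤ a - b)]

lemma int_aux {s c : ℝ} (hc : 0 < c) :
    IntegrableOn (fun τ : ℝ => τ ^ 2 * (1 + τ ^ 2) ^ s * Real.exp (-c * τ)) (Set.Ioi 0) := by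
  obtain ⟨n, hn⟩ := exists_nat_ge (s + 1)
  have hint1 : IntegrableOn (fun τ : ℝ => Real.exp (-c * τ)) (Set.Ioi 0) :=
    exp_neg_integrableOn_Ioi 0 hc
  have hint2 : IntegrableOn (fun τ : ℝ => τ ^ (2 * n) * Real.exp (-c * τ)) (Set.Ioi 0) := by
    have h := integrableOn_rpow_mul_exp_neg_mul_rpow (p := 1) (s := ((2 * n : ℕ) : ℝ)) (b := c)
      (lt_of_lt_of_le neg_one_lt_zero (by positivity)) zero_lt_one hc
    refine h.congr_fun (fun x hx => ?_) measurableSet_Ioi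
    beta_reduce
    rw [Real.rpow_natCast, Real.rpow_one]
  have hint : IntegrableOn
      (fun τ : ℝ => (2:ℝ) ^ n * (Real.exp (-c * τ) + τ ^ (2 * n) * Real.exp (-c * τ)))
      (Set.Ioi 0) := (hint1.add hint2).const_mul _
  refine Integrable.mono' hint ?_ ?_
  · exact (((continuous_pow 2).mul (w_cont s)).mul
      (Real.continuous_exp.comp (continuous_const.mul continuous_id))).aestronglyMeasurable
  · rw [ae_restrict_iff' measurableSet_Ioi]
    refine Eventually.of_forall fun τ hτ => ?_
    have hτ0 : (0:ℝ) < τ := hτ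
    have hb : (0:ℝ) < 1 + τ ^ 2 := by positivity
    have key : τ ^ 2 * (1 + τ ^ 2) ^ s ≤ 2 ^ n * (1 + τ ^ (2 * n)) := by
      have h1 : τ ^ 2 * (1 + τ ^ 2) ^ s ≤ (1 + τ ^ 2) ^ (s + 1) := by
        rw [Real.rpow_add hb, Real.rpow_one, mul_comm]
        exact mul_le_mul_of_nonneg_left (by linarith) (Real.rpow_nonneg hb.le s)
      have h2 : (1 + τ ^ 2) ^ (s + 1) ≤ (1 + τ ^ 2) ^ (n : ℝ) :=
        Real.rpow_le_rpow_of_exponent_le (by nlinarith) hn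
      have h3 : (1 + τ ^ 2) ^ (n : ℝ) = (1 + τ ^ 2) ^ n := Real.rpow_natCast _ n
      have h4 : (1 + τ ^ 2) ^ n ≤ (2 * max 1 (τ ^ 2)) ^ n := by
        apply pow_le_pow_left₀ hb.le
        rcases le_total (τ ^ 2) 1 with h | h
        · rw [max_eq_left h]; linarith
        · rw [max_eq_right h]; linarith
      have h5 : (2 * max 1 (τ ^ 2)) ^ n = 2 ^ n * (max 1 (τ ^ 2)) ^ n := mul_pow 2 _ n
      have h6 : (max 1 (τ ^ 2)) ^ n ≤ 1 + τ ^ (2 * n) := by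
        have hp : (0:ℝ) ≤ τ ^ (2 * n) := by positivity
        rcases le_total (τ ^ 2) 1 with h | h
        · rw [max_eq_left h, one_pow]; linarith
        · rw [max_eq_right h, ← pow_mul]; linarith
      have h7 : (2:ℝ) ^ n * (max 1 (τ ^ 2)) ^ n ≤ 2 ^ n * (1 + τ ^ (2 * n)) := by
        have : (0:ℝ) ≤ (2:ℝ) ^ n := by positivity
        nlinarith
      calc τ ^ 2 * (1 + τ ^ 2) ^ s ≤ (1 + τ ^ 2) ^ (s + 1) := h1
        _ ≤ (1 + τ ^ 2) ^ (n : ℝ) := h2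
        _ = (1 + τ ^ 2) ^ n := h3
        _ ≤ (2 * max 1 (τ ^ 2)) ^ n := h4
        _ = 2 ^ n * (max 1 (τ ^ 2)) ^ n := h5
        _ ≤ 2 ^ n * (1 + τ ^ (2 * n)) := h7
    rw [Real.norm_eq_abs, abs_of_nonneg (by positivity)]
    calc τ ^ 2 * (1 + τ ^ 2) ^ s * Real.exp (-c * τ)
        ≤ (2 ^ n * (1 + τ ^ (2 * n))) * Real.exp (-c * τ) :=
          mul_le_mul_of_nonneg_right key (Real.exp_nonneg _)
      _ = 2 ^ n * (Real.exp (-c * τ) + τ ^ (2 * n) * Real.exp (-c * τ)) := by ring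

lemma dom_aux {g : ℝ → ℂ} {M : ℝ} (hgM : ∀ᵐ τ : ℝ, ‖g τ‖ ≤ M)
    (hcausal : ∀ᵐ τ : ℝ, τ < 0 → g τ = 0) (s : ℝ) (r F : ℝ → ℝ)
    (hr0 : r 0 = 0) (hF : ∀ τ : ℝ, 0 < τ → M ^ 2 * (r τ) ^ 2 * (1 + τ ^ 2) ^ s ≤ F τ) :
    ∀ᵐ τ : ℝ, (1 + τ ^ 2) ^ s * ‖g τ * Complex.ofReal (r τ)‖ ^ 2 ≤
      Set.indicator (Set.Ioi 0) F τ := by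
  filter_upwards [hgM, hcausal] with τ hMτ h0
  have hnorm : ‖g τ * Complex.ofReal (r τ)‖ ^ 2 = ‖g τ‖ ^ 2 * (r τ) ^ 2 := by
    rw [norm_mul, mul_pow, Complex.norm_real, Real.norm_eq_abs, sq_abs]
  rcases lt_trichotomy τ 0 with ht | ht | ht
  · rw [Set.indicator_of_notMem (by simp only [Set.mem_Ioi]; intro h; linarith) F, h0 ht]
    simp
  · rw [hnorm, Set.indicator_of_notMem (by simp [ht]) F, ht, hr0]
    simp
  · rw [Set.indicator_of_mem (Set.mem_Ioi.mpr ht) F, hnorm]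
    calc (1 + τ ^ 2) ^ s * (‖g τ‖ ^ 2 * (r τ) ^ 2)
        ≤ (1 + τ ^ 2) ^ s * (M ^ 2 * (r τ) ^ 2) := by
          have hM0 : 0 ≤ M := le_trans (norm_nonneg _) hMτ
          gcongr
      _ = M ^ 2 * (r τ) ^ 2 * (1 + τ ^ 2) ^ s := by ring
      _ ≤ F τ := hF τ ht

theorem stmt3 (g : ℝ → ℂ) (hg : MemLp g ⊤ volume)
    (hcausal : ∀ᵐ τ : ℝ, τ < 0 → g τ = 0) :
    -- (a) continuity from (0,∞) to H^s for every s ∈ ℝ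
    (∀ s : ℝ, ∀ η₀ : ℝ, 0 < η₀ →
      Tendsto
        (fun η : ℝ => hsNorm s
          (fun τ => g τ * Complex.ofReal (Real.exp (-η * τ) - Real.exp (-η₀ * τ))))
        (nhdsWithin η₀ (Set.Ioi 0)) (nhds 0)) ∧
    -- (b) uniform continuity from [0,∞) to H^{-s} for s > 1/2
    (∀ s : ℝ, 1 / 2 < s → ∀ ε : ℝ, 0 < ε → ∃ δ : ℝ, 0 < δ ∧
      ∀ η₁ η₂ : ℝ, 0 ≤ η₁ → 0 ≤ η₂ → |η₁ - η₂| < δ →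
        hsNorm (-s)
          (fun τ => g τ * Complex.ofReal (Real.exp (-η₁ * τ) - Real.exp (-η₂ * τ))) < ε) ∧
    -- (c) strong convergence g̃(·+iη) → ĝ in H^{-s} as η → 0⁺, for s > 1/2
    (∀ s : ℝ, 1 / 2 < s →
      Tendsto
        (fun η : ℝ => hsNorm (-s) (fun τ => g τ * Complex.ofReal (Real.exp (-η * τ) - 1)))
        (nhdsWithin 0 (Set.Ioi 0)) (nhds 0)) ∧
    -- (d) the quantitative bound
    (∀ s : ℝ, 1 / 2 < s → ∀ η : ℝ, 0 ≤ η →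
      hsNorm (-s) (fun τ => g τ * Complex.ofReal (Real.exp (-η * τ) - 1))
        ≤ (eLpNorm g ⊤ volume).toReal *
            Real.sqrt (2 * π *
              ∫ τ in Set.Ioi (0 : ℝ), (1 - Real.exp (-η * τ)) ^ 2 * (1 + τ ^ 2) ^ (-s))) := by
  set M := (eLpNorm g ⊤ volume).toReal with hMdef
  have hM0 : 0 ≤ M := ENNReal.toReal_nonneg
  have hgM : ∀ᵐ τ : ℝ, ‖g τ‖ ≤ M := by
    have h1 : ∀ᵐ τ : ℝ, (‖g τ‖₊ : ENNReal) ≤ eLpNormEssSup g volume := ae_le_eLpNormEssSup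
    have h2 : eLpNorm g ⊤ volume = eLpNormEssSup g volume := eLpNorm_exponent_top
    have hfin : eLpNormEssSup g volume ≠ ⊤ := by rw [← h2]; exact hg.2.ne
    filter_upwards [h1] with τ hτ
    have := ENNReal.toReal_mono hfin hτ
    simpa [hMdef, h2] using this
  -- Part (a)
  have partA : ∀ s : ℝ, ∀ η₀ : ℝ, 0 < η₀ →
      Tendsto
        (fun η : ℝ => hsNorm s
          (fun τ => g τ * Complex.ofReal (Real.exp (-η * τ) - Real.exp (-η₀ * τ))))
        (nhdsWithin η₀ (Set.Ioi 0)) (nhds 0) := by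
    intro s η₀ hη₀
    have hC : IntegrableOn (fun τ : ℝ => τ ^ 2 * (1 + τ ^ 2) ^ s * Real.exp (-η₀ * τ))
        (Set.Ioi 0) := int_aux hη₀
    set C := ∫ τ in Set.Ioi (0:ℝ), τ ^ 2 * (1 + τ ^ 2) ^ s * Real.exp (-η₀ * τ) with hCdef
    set K := Real.sqrt (2 * π * (M ^ 2 * C)) with hKdef
    refine squeeze_zero' (g := fun η => |η - η₀| * K)
      (Eventually.of_forall fun η => Real.sqrt_nonneg _) ?_ ?_
    · have hev : ∀ᶠ η in nhdsWithin η₀ (Set.Ioi 0), |η - η₀| < η₀ / 2 :=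
        Filter.Eventually.filter_mono nhdsWithin_le_nhds (by
          filter_upwards [Metric.ball_mem_nhds η₀ (by positivity : (0:ℝ) < η₀ / 2)] with η hη
          simpa [Real.dist_eq] using hη)
      filter_upwards [hev] with η hη
      have hηhalf : η₀ / 2 ≤ η := by
        have := abs_lt.mp hη; linarith [this.1]
      have hF : ∀ τ : ℝ, 0 < τ →
          M ^ 2 * (Real.exp (-η * τ) - Real.exp (-η₀ * τ)) ^ 2 * (1 + τ ^ 2) ^ s ≤
          (M ^ 2 * (η - η₀) ^ 2) * (τ ^ 2 * (1 + τ ^ 2) ^ s * Real.exp (-η₀ * τ)) := by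
        intro τ hτ
        have key : (Real.exp (-η * τ) - Real.exp (-η₀ * τ)) ^ 2 ≤
            (η - η₀) ^ 2 * τ ^ 2 * Real.exp (-η₀ * τ) := by
          rw [neg_mul, neg_mul]
          have e1 : |Real.exp (-(η * τ)) - Real.exp (-(η₀ * τ))| ≤
              |η * τ - η₀ * τ| * Real.exp (-(η₀ / 2 * τ)) :=
            exp_sub_exp_le_mul (by nlinarith) (by nlinarith)
          calc (Real.exp (-(η * τ)) - Real.exp (-(η₀ * τ))) ^ 2
              = |Real.exp (-(η * τ)) - Real.exp (-(η₀ * τ))| ^ 2 := (sq_abs _).symm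
            _ ≤ (|η * τ - η₀ * τ| * Real.exp (-(η₀ / 2 * τ))) ^ 2 := by
                gcongr
            _ = ((η - η₀) * τ) ^ 2 * (Real.exp (-(η₀ / 2 * τ))) ^ 2 := by
                rw [mul_pow, ← sub_mul, sq_abs]
            _ = (η - η₀) ^ 2 * τ ^ 2 * Real.exp (-(η₀ * τ)) := by
                rw [mul_pow, sq (Real.exp _), ← Real.exp_add]
                congr 2
                ring
        calc M ^ 2 * (Real.exp (-η * τ) - Real.exp (-η₀ * τ)) ^ 2 * (1 + τ ^ 2) ^ s
            ≤ M ^ 2 * ((η - η₀) ^ 2 * τ ^ 2 * Real.exp (-η₀ * τ)) * (1 + τ ^ 2) ^ s := by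
              gcongr
          _ = (M ^ 2 * (η - η₀) ^ 2) * (τ ^ 2 * (1 + τ ^ 2) ^ s * Real.exp (-η₀ * τ)) := by ring
      have hdom := dom_aux hgM hcausal s _ _ (by simp)  hF
      have hBint : Integrable (Set.indicator (Set.Ioi 0)
          (fun τ => (M ^ 2 * (η - η₀) ^ 2) * (τ ^ 2 * (1 + τ ^ 2) ^ s * Real.exp (-η₀ * τ)))) :=
        MeasureTheory.IntegrableOn.integrable_indicator (hC.const_mul _) measurableSet_Ioi
      have hle := hsNorm_le_sqrt s _ _ hBint hdom
      have hInt : (∫ τ, Set.indicator (Set.Ioi 0)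
          (fun τ => (M ^ 2 * (η - η₀) ^ 2) * (τ ^ 2 * (1 + τ ^ 2) ^ s * Real.exp (-η₀ * τ))) τ)
          = (M ^ 2 * (η - η₀) ^ 2) * C := by
        rw [integral_indicator measurableSet_Ioi, integral_const_mul, hCdef]
      rw [hInt] at hle
      refine hle.trans (le_of_eq ?_)
      rw [show 2 * π * (M ^ 2 * (η - η₀) ^ 2 * C) = (η - η₀) ^ 2 * (2 * π * (M ^ 2 * C)) by ring,
        Real.sqrt_mul (sq_nonneg _), Real.sqrt_sq_eq_abs, hKdef]
    · have h : Tendsto (fun η : ℝ => |η - η₀| * K) (nhds η₀) (nhds (|η₀ - η₀| * K)) :=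
        ((((continuous_id.sub continuous_const).abs).mul continuous_const).tendsto η₀ :)
      have h2 := h.mono_left (nhdsWithin_le_nhds (s := Set.Ioi 0))
      simpa using h2
  -- Part (b)
  have partB : ∀ s : ℝ, 1 / 2 < s → ∀ ε : ℝ, 0 < ε → ∃ δ : ℝ, 0 < δ ∧
      ∀ η₁ η₂ : ℝ, 0 ≤ η₁ → 0 ≤ η₂ → |η₁ - η₂| < δ →
        hsNorm (-s)
          (fun τ => g τ * Complex.ofReal (Real.exp (-η₁ * τ) - Real.exp (-η₂ * τ))) < ε := by
    intro s hs ε hε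
    have hw : Integrable (fun τ : ℝ => (1 + τ ^ 2) ^ (-s)) := weight_integrable hs
    set ε' : ℝ := ε ^ 2 / (2 * π * (M ^ 2 + 1)) with hε'def
    have hε' : 0 < ε' := by positivity
    have hΦ : Tendsto (fun δ : ℝ => ∫ τ in Set.Ioi (0:ℝ), min (δ ^ 2 * τ ^ 2) 1 * (1 + τ ^ 2) ^ (-s))
        (nhds 0) (nhds 0) := by
      have h := tendsto_integral_filter_of_dominated_convergence
        (μ := volume.restrict (Set.Ioi 0)) (l := nhds (0:ℝ))
        (F := fun δ τ => min (δ ^ 2 * τ ^ 2) 1 * (1 + τ ^ 2) ^ (-s))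
        (f := fun _ => (0:ℝ)) (bound := fun τ => (1 + τ ^ 2) ^ (-s))
        (Eventually.of_forall fun δ =>
          (((continuous_const.mul (continuous_pow 2)).min continuous_const).mul
            (w_cont (-s))).aestronglyMeasurable)
        (Eventually.of_forall fun δ => Eventually.of_forall fun τ => by
          have h1 : 0 ≤ min (δ ^ 2 * τ ^ 2) 1 := le_min (by positivity) zero_le_one
          have h2 : (0:ℝ) ≤ (1 + τ ^ 2) ^ (-s) := Real.rpow_nonneg (by positivity) _
          rw [Real.norm_eq_abs, abs_of_nonneg (mul_nonneg h1 h2)]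
          calc min (δ ^ 2 * τ ^ 2) 1 * (1 + τ ^ 2) ^ (-s)
              ≤ 1 * (1 + τ ^ 2) ^ (-s) :=
                mul_le_mul_of_nonneg_right (min_le_right _ _) h2
            _ = (1 + τ ^ 2) ^ (-s) := one_mul _)
        hw.integrableOn
        (Eventually.of_forall fun τ => by
          have hc : Continuous (fun δ : ℝ => min (δ ^ 2 * τ ^ 2) 1 * (1 + τ ^ 2) ^ (-s)) :=
            (((continuous_pow 2).mul continuous_const).min continuous_const).mul continuous_const
          have h00 : min ((0:ℝ) ^ 2 * τ ^ 2) 1 * (1 + τ ^ 2) ^ (-s) = 0 := by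
            rw [show (0:ℝ) ^ 2 * τ ^ 2 = 0 by ring, min_eq_left zero_le_one, zero_mul]
          simpa [h00] using hc.tendsto 0)
      simpa using h
    obtain ⟨δ₀, hδ₀, hΦδ⟩ := Metric.tendsto_nhds_nhds.mp hΦ ε' hε'
    refine ⟨δ₀ / 2, by positivity, ?_⟩
    intro η₁ η₂ h1 h2 hd
    set δ : ℝ := δ₀ / 2 with hδdef
    have hδpos : 0 < δ := by positivity
    set Φδ := ∫ τ in Set.Ioi (0:ℝ), min (δ ^ 2 * τ ^ 2) 1 * (1 + τ ^ 2) ^ (-s) with hΦdef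
    have hΦval : |Φδ| < ε' := by
      have := hΦδ (x := δ) (by rw [Real.dist_eq]; rw [sub_zero, abs_of_nonneg hδpos.le]; linarith)
      simpa [Real.dist_eq, hΦdef] using this
    have hΦnn : 0 ≤ Φδ := integral_nonneg fun τ =>
      mul_nonneg (le_min (by positivity) zero_le_one) (Real.rpow_nonneg (by positivity) _)
    have hF : ∀ τ : ℝ, 0 < τ →
        M ^ 2 * (Real.exp (-η₁ * τ) - Real.exp (-η₂ * τ)) ^ 2 * (1 + τ ^ 2) ^ (-s) ≤
        M ^ 2 * (min (δ ^ 2 * τ ^ 2) 1 * (1 + τ ^ 2) ^ (-s)) := by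
      intro τ hτ
      have key : (Real.exp (-η₁ * τ) - Real.exp (-η₂ * τ)) ^ 2 ≤ min (δ ^ 2 * τ ^ 2) 1 := by
        rw [neg_mul, neg_mul]
        have e1 : |Real.exp (-(η₁ * τ)) - Real.exp (-(η₂ * τ))| ≤ |η₁ * τ - η₂ * τ| :=
          exp_sub_exp_le (by positivity) (by positivity)
        have e2 : |Real.exp (-(η₁ * τ)) - Real.exp (-(η₂ * τ))| ≤ 1 :=
          exp_sub_exp_le_one (by positivity) (by positivity)
        apply le_min
        · have habs : |η₁ * τ - η₂ * τ| = |η₁ - η₂| * τ := by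
            rw [← sub_mul, abs_mul, abs_of_nonneg hτ.le]
          calc (Real.exp (-(η₁ * τ)) - Real.exp (-(η₂ * τ))) ^ 2
              = |Real.exp (-(η₁ * τ)) - Real.exp (-(η₂ * τ))| ^ 2 := (sq_abs _).symm
            _ ≤ (|η₁ - η₂| * τ) ^ 2 := by
                rw [← habs]; gcongr
            _ ≤ (δ * τ) ^ 2 := by
                gcongr
            _ = δ ^ 2 * τ ^ 2 := by ring
        · calc (Real.exp (-(η₁ * τ)) - Real.exp (-(η₂ * τ))) ^ 2
              = |Real.exp (-(η₁ * τ)) - Real.exp (-(η₂ * τ))| ^ 2 := (sq_abs _).symm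
            _ ≤ 1 ^ 2 := by gcongr
            _ = 1 := one_pow 2
      calc M ^ 2 * (Real.exp (-η₁ * τ) - Real.exp (-η₂ * τ)) ^ 2 * (1 + τ ^ 2) ^ (-s)
          = M ^ 2 * ((Real.exp (-η₁ * τ) - Real.exp (-η₂ * τ)) ^ 2 * (1 + τ ^ 2) ^ (-s)) := by
            ring
        _ ≤ M ^ 2 * (min (δ ^ 2 * τ ^ 2) 1 * (1 + τ ^ 2) ^ (-s)) := by
            gcongr

    have hdom := dom_aux hgM hcausal (-s) _ _ (by simp) hF
    have hGint : Integrable (fun τ : ℝ => M ^ 2 * (min (δ ^ 2 * τ ^ 2) 1 * (1 + τ ^ 2) ^ (-s))) := by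
      refine (hw.const_mul (M ^ 2)).mono' ?_ (Eventually.of_forall fun τ => ?_)
      · exact (continuous_const.mul
          (((continuous_const.mul (continuous_pow 2)).min continuous_const).mul
            (w_cont (-s)))).aestronglyMeasurable
      · have h1 : 0 ≤ min (δ ^ 2 * τ ^ 2) 1 := le_min (by positivity) zero_le_one
        have h2 : (0:ℝ) ≤ (1 + τ ^ 2) ^ (-s) := Real.rpow_nonneg (by positivity) _
        rw [Real.norm_eq_abs, abs_of_nonneg (by positivity)]
        calc M ^ 2 * (min (δ ^ 2 * τ ^ 2) 1 * (1 + τ ^ 2) ^ (-s))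
            ≤ M ^ 2 * (1 * (1 + τ ^ 2) ^ (-s)) := by
              gcongr
              exact min_le_right _ _
          _ = M ^ 2 * (1 + τ ^ 2) ^ (-s) := by ring
    have hle := hsNorm_le_sqrt (-s) _ _ (hGint.indicator measurableSet_Ioi) hdom
    have hInt : (∫ τ, Set.indicator (Set.Ioi 0)
        (fun τ => M ^ 2 * (min (δ ^ 2 * τ ^ 2) 1 * (1 + τ ^ 2) ^ (-s))) τ) = M ^ 2 * Φδ := by
      rw [integral_indicator measurableSet_Ioi, integral_const_mul, hΦdef]
    rw [hInt] at hle
    refine lt_of_le_of_lt hle ?_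
    rw [Real.sqrt_lt' hε]
    have hb1 : 2 * π * (M ^ 2 * Φδ) ≤ 2 * π * ((M ^ 2 + 1) * Φδ) := by
      nlinarith [Real.pi_pos]
    have hb2 : 2 * π * ((M ^ 2 + 1) * Φδ) < 2 * π * ((M ^ 2 + 1) * ε') := by
      have hΦlt : Φδ < ε' := lt_of_le_of_lt (le_abs_self _) hΦval
      have hpos : (0:ℝ) < 2 * π * (M ^ 2 + 1) := by positivity
      nlinarith
    have hb3 : 2 * π * ((M ^ 2 + 1) * ε') = ε ^ 2 := by
      rw [hε'def]
      field_simp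
    linarith
  -- Part (c)
  have partC : ∀ s : ℝ, 1 / 2 < s →
      Tendsto
        (fun η : ℝ => hsNorm (-s) (fun τ => g τ * Complex.ofReal (Real.exp (-η * τ) - 1)))
        (nhdsWithin 0 (Set.Ioi 0)) (nhds 0) := by
    intro s hs
    rw [Metric.tendsto_nhdsWithin_nhds]
    intro ε hε
    obtain ⟨δ, hδ, hb⟩ := partB s hs ε hε
    refine ⟨δ, hδ, ?_⟩
    intro η hη hdist
    have hd : |η - 0| < δ := by rwa [Real.dist_eq] at hdist
    have := hb η 0 (le_of_lt hη) le_rfl hd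
    have heq : (fun τ : ℝ => g τ * Complex.ofReal (Real.exp (-η * τ) - Real.exp (-0 * τ)))
        = fun τ : ℝ => g τ * Complex.ofReal (Real.exp (-η * τ) - 1) := by
      funext τ
      rw [neg_zero, zero_mul, Real.exp_zero]
    rw [heq] at this
    have hnn : (0:ℝ) ≤ hsNorm (-s) (fun τ : ℝ => g τ * Complex.ofReal (Real.exp (-η * τ) - 1)) :=
      Real.sqrt_nonneg _
    rw [Real.dist_eq, sub_zero, abs_of_nonneg hnn]
    exact this
  -- Part (d)
  have partD : ∀ s : ℝ, 1 / 2 < s → ∀ η : ℝ, 0 ≤ η →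
      hsNorm (-s) (fun τ => g τ * Complex.ofReal (Real.exp (-η * τ) - 1))
        ≤ M * Real.sqrt (2 * π *
            ∫ τ in Set.Ioi (0 : ℝ), (1 - Real.exp (-η * τ)) ^ 2 * (1 + τ ^ 2) ^ (-s)) := by
    intro s hs η hη
    have hw : Integrable (fun τ : ℝ => (1 + τ ^ 2) ^ (-s)) := weight_integrable hs
    set J := ∫ τ in Set.Ioi (0:ℝ), (1 - Real.exp (-η * τ)) ^ 2 * (1 + τ ^ 2) ^ (-s) with hJdef
    have hF : ∀ τ : ℝ, 0 < τ →
        M ^ 2 * (Real.exp (-η * τ) - 1) ^ 2 * (1 + τ ^ 2) ^ (-s) ≤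
        M ^ 2 * ((1 - Real.exp (-η * τ)) ^ 2 * (1 + τ ^ 2) ^ (-s)) :=
      fun τ hτ => le_of_eq (by ring)
    have hdom := dom_aux hgM hcausal (-s) _ _ (by simp) hF
    have hGint : IntegrableOn
        (fun τ : ℝ => M ^ 2 * ((1 - Real.exp (-η * τ)) ^ 2 * (1 + τ ^ 2) ^ (-s)))
        (Set.Ioi 0) := by
      refine Integrable.mono' (hw.const_mul (M ^ 2)).integrableOn ?_ ?_
      · exact (continuous_const.mul
          (((continuous_const.sub ((continuous_const.mul continuous_id).rexp)).pow 2).mul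
            (w_cont (-s)))).aestronglyMeasurable
      · rw [ae_restrict_iff' measurableSet_Ioi]
        refine Eventually.of_forall fun τ hτ => ?_
        have hτ0 : (0:ℝ) < τ := hτ
        have he1 : Real.exp (-η * τ) ≤ 1 := Real.exp_le_one_iff.mpr (by nlinarith)
        have he0 : 0 < Real.exp (-η * τ) := Real.exp_pos _
        have hsq : (1 - Real.exp (-η * τ)) ^ 2 ≤ 1 := by nlinarith
        have h2 : (0:ℝ) ≤ (1 + τ ^ 2) ^ (-s) := Real.rpow_nonneg (by positivity) _
        rw [Real.norm_eq_abs, abs_of_nonneg (by positivity)]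
        calc M ^ 2 * ((1 - Real.exp (-η * τ)) ^ 2 * (1 + τ ^ 2) ^ (-s))
            ≤ M ^ 2 * (1 * (1 + τ ^ 2) ^ (-s)) := by
              gcongr
          _ = M ^ 2 * (1 + τ ^ 2) ^ (-s) := by ring
    have hle := hsNorm_le_sqrt (-s) _ _ (hGint.integrable_indicator measurableSet_Ioi) hdom
    have hInt : (∫ τ, Set.indicator (Set.Ioi 0)
        (fun τ => M ^ 2 * ((1 - Real.exp (-η * τ)) ^ 2 * (1 + τ ^ 2) ^ (-s))) τ)
        = M ^ 2 * J := by
      rw [integral_indicator measurableSet_Ioi, integral_const_mul, hJdef]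
    rw [hInt] at hle
    refine hle.trans (le_of_eq ?_)
    rw [show 2 * π * (M ^ 2 * J) = M ^ 2 * (2 * π * J) by ring,
      Real.sqrt_mul (sq_nonneg M), Real.sqrt_sq hM0]
  exact ⟨partA, partB, partC, partD⟩
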